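/- Let (Ω, 𝒜, μ) be a probability space, T : Ω → Ω an invertible, ergodic, μ-preserving transformation, and c : Ω → ℝ a measurable function with c > 0 μ-a.e.; set c̄ = c + c∘T^{−1}. Assume both c and 1/c are μ-integrable. For ω ∈ Ω define f_ω : ℤ → ℝ by f_ω(0) = 0, f_ω(m) = ∑_{ℓ=0}^{m−1} (1/c(T^ℓω)) ∑_{k=1}^{ℓ} c̄(T^kω) for m ≥ 1, and f_ω(m) = ∑_{ℓ=1}^{−m} (1/c(T^{−ℓ}ω)) ∑_{k=0}^{ℓ−1} c̄(T^{−k}ω) for m ≤ −1. Then for μ-almost every ω, f_ω(m)/m² converges, as m → +∞ and as m → −∞, to (1/2)(∫_Ω (1/c) dμ)(∫_Ω c̄ dμ). -/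

import Mathlib

open Finset Filter MeasureTheory
open Topology

section Aux


-- gauss
lemma gauss_real (n : ℕ) : (∑ ℓ ∈ Finset.range n, (ℓ : ℝ)) = n * (n - 1) / 2 := by
  induction n with
  | zero => simp
  | succ n ih => rw [Finset.sum_range_succ, ih]; push_cast; ring

-- shift of average
lemma succ_div {x : ℕ → ℝ} {L : ℝ} (h : Tendsto (fun n => x n / n) atTop (𝓝 L)) :
    Tendsto (fun n => x (n + 1) / n) atTop (𝓝 L) := by
  have h1 : Tendsto (fun n : ℕ => x (n + 1) / (n + 1) * ((n + 1 : ℝ) / n)) atTop (𝓝 (L * 1)) := by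
    apply Tendsto.mul
    · exact (h.comp (tendsto_add_atTop_nat 1)).congr (by intro n; simp)
    · have : Tendsto (fun n : ℕ => 1 + 1 / (n : ℝ)) atTop (𝓝 (1 + 0)) :=
        tendsto_const_nhds.add tendsto_one_div_atTop_nhds_zero_nat
      simp only [add_zero] at this
      refine this.congr' ?_
      filter_upwards [eventually_ge_atTop 1] with n hn
      have : (n : ℝ) ≠ 0 := by positivity
      field_simp
  rw [mul_one] at h1
  refine h1.congr' ?_
  filter_upwards [eventually_ge_atTop 1] with n hn
  have hn' : (n : ℝ) ≠ 0 := by positivity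
  have : ((n : ℝ) + 1) ≠ 0 := by positivity
  field_simp

-- A': y → L  ⇒  (∑ y ℓ * ℓ)/n² → L/2
lemma lemA' {y : ℕ → ℝ} {L : ℝ} (hy : Tendsto y atTop (𝓝 L)) :
    Tendsto (fun n => (∑ ℓ ∈ Finset.range n, y ℓ * ℓ) / (n : ℝ) ^ 2) atTop (𝓝 (L / 2)) := by
  have key : ∀ n : ℕ, (∑ ℓ ∈ Finset.range n, y ℓ * ℓ)
      = L * (n * (n - 1) / 2) + ∑ ℓ ∈ Finset.range n, (y ℓ - L) * ℓ := by
    intro n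
    rw [← gauss_real, Finset.mul_sum, ← Finset.sum_add_distrib]
    congr 1; ext ℓ; ring
  have herr : Tendsto (fun n => (∑ ℓ ∈ Finset.range n, (y ℓ - L) * ℓ) / (n : ℝ) ^ 2)
      atTop (𝓝 0) := by
    have hces : Tendsto (fun n => (∑ ℓ ∈ Finset.range n, |y ℓ - L|) / n) atTop (𝓝 0) := by
      have h0 : Tendsto (fun ℓ => y ℓ - L) atTop (𝓝 (L - L)) := hy.sub tendsto_const_nhds
      have h1 : Tendsto (fun ℓ => |y ℓ - L|) atTop (𝓝 0) := by simpa using h0.abs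
      exact h1.cesaro.congr fun n => (div_eq_inv_mul _ _).symm
    apply squeeze_zero_norm _ hces
    intro n
    rcases Nat.eq_zero_or_pos n with h0 | h0
    · simp [h0]
    have hn : (0:ℝ) < n := by exact_mod_cast h0
    rw [Real.norm_eq_abs, abs_div, abs_of_nonneg (by positivity : (0:ℝ) ≤ (n:ℝ)^2)]
    rw [div_le_div_iff₀ (by positivity) hn]
    have h1 : |∑ ℓ ∈ Finset.range n, (y ℓ - L) * ℓ| ≤ ∑ ℓ ∈ Finset.range n, |y ℓ - L| * n := by
      refine (Finset.abs_sum_le_sum_abs _ _).trans (Finset.sum_le_sum fun ℓ hℓ => ?_)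
      rw [abs_mul, Nat.abs_cast]
      have : (ℓ : ℝ) ≤ n := by exact_mod_cast (Finset.mem_range.mp hℓ).le
      exact mul_le_mul_of_nonneg_left this (abs_nonneg _)
    calc |∑ ℓ ∈ Finset.range n, (y ℓ - L) * ℓ| * n
        ≤ (∑ ℓ ∈ Finset.range n, |y ℓ - L| * n) * n := by
          exact mul_le_mul_of_nonneg_right h1 hn.le
      _ = (∑ ℓ ∈ Finset.range n, |y ℓ - L|) * (n:ℝ)^2 := by
          rw [← Finset.sum_mul]; ring
  have hmain : Tendsto (fun n : ℕ => L * ((n : ℝ) * (n - 1) / 2) / (n : ℝ) ^ 2)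
      atTop (𝓝 (L / 2)) := by
    have hbase : Tendsto (fun n : ℕ => L * (1 - 1 / (n:ℝ)) / 2) atTop (𝓝 (L / 2)) := by
      have : Tendsto (fun n : ℕ => L * (1 - 1 / (n:ℝ)) / 2) atTop (𝓝 (L * (1 - 0) / 2)) :=
        ((tendsto_const_nhds.sub tendsto_one_div_atTop_nhds_zero_nat).const_mul L).div_const 2
      simpa using this
    refine Tendsto.congr' ?_ hbase
    filter_upwards [eventually_ge_atTop 1] with n hn
    have hn' : (n : ℝ) ≠ 0 := by positivity
    field_simp
  have := hmain.add herr
  rw [add_zero] at this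
  refine this.congr fun n => ?_
  rw [key n, add_div]

-- A: z n / n → L ⇒ (∑ z)/n² → L/2
lemma lemA {z : ℕ → ℝ} {L : ℝ} (hz : Tendsto (fun n => z n / n) atTop (𝓝 L)) :
    Tendsto (fun n => (∑ ℓ ∈ Finset.range n, z ℓ) / (n : ℝ) ^ 2) atTop (𝓝 (L / 2)) := by
  set y : ℕ → ℝ := fun ℓ => if ℓ = 0 then 0 else z ℓ / ℓ with hy
  have hyt : Tendsto y atTop (𝓝 L) := by
    refine Tendsto.congr' ?_ hz
    filter_upwards [eventually_ge_atTop 1] with n hn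
    simp [hy, Nat.one_le_iff_ne_zero.mp hn]
  have h1 := lemA' hyt
  have h2 : Tendsto (fun n : ℕ => z 0 / (n:ℝ)^2) atTop (𝓝 0) := by
    have := tendsto_const_div_atTop_nhds_zero_nat (z 0)
    have hsq : Tendsto (fun n : ℕ => ((n:ℝ)^2)) atTop atTop :=
      (tendsto_pow_atTop (two_ne_zero)).comp tendsto_natCast_atTop_atTop
    exact Tendsto.div_atTop tendsto_const_nhds hsq
  have := h1.add h2
  rw [add_zero] at this
  refine Tendsto.congr' ?_ this
  filter_upwards [eventually_ge_atTop 1] with n hn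
  have : ∑ ℓ ∈ Finset.range n, z ℓ = (∑ ℓ ∈ Finset.range n, y ℓ * ℓ) + z 0 := by
    have : ∀ ℓ ∈ Finset.range n, z ℓ = y ℓ * ℓ + (if ℓ = 0 then z 0 else 0) := by
      intro ℓ _
      rcases Nat.eq_zero_or_pos ℓ with h | h
      · simp [hy, h]
      · have hℓ : ℓ ≠ 0 := Nat.pos_iff_ne_zero.mp h
        have : (ℓ : ℝ) ≠ 0 := by exact_mod_cast hℓ
        simp only [hy, hℓ, if_false, add_zero]
        exact (div_mul_cancel₀ _ this).symm
    have hlast : (∑ ℓ ∈ Finset.range n, if ℓ = 0 then z 0 else 0) = z 0 := by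
      rw [Finset.sum_eq_single_of_mem 0 (Finset.mem_range.mpr hn)]
      · simp
      · intro b _ hb; simp [hb]
    rw [Finset.sum_congr rfl this, Finset.sum_add_distrib, hlast]
  rw [this, add_div]

lemma const_div_sq (C : ℝ) : Tendsto (fun n : ℕ => C / (n:ℝ)^2) atTop (𝓝 0) := by
  have hsq : Tendsto (fun n : ℕ => ((n:ℝ)^2)) atTop atTop :=
    (tendsto_pow_atTop (two_ne_zero)).comp tendsto_natCast_atTop_atTop
  exact Tendsto.div_atTop tendsto_const_nhds hsq

lemma lemE {u δ : ℕ → ℝ} (hu : ∀ ℓ, 0 ≤ u ℓ) (hδ0 : ∀ ℓ, 0 ≤ δ ℓ)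
    (hδ : Tendsto δ atTop (𝓝 0)) {C : ℝ} (hC : ∀ n, (∑ ℓ ∈ Finset.range n, u ℓ) ≤ C * n) :
    Tendsto (fun n => (∑ ℓ ∈ Finset.range n, u ℓ * δ ℓ) / (n : ℝ)) atTop (𝓝 0) := by
  have hC0 : 0 ≤ C := by
    have h1 := hC 1
    simp only [Finset.sum_range_one, Nat.cast_one, mul_one] at h1
    exact le_trans (hu 0) h1
  set C' : ℝ := C + 1 with hC'
  have hC'pos : 0 < C' := by positivity
  rw [Metric.tendsto_atTop]
  intro ε hε
  obtain ⟨N₁, hN₁⟩ := Metric.tendsto_atTop.mp hδ (ε / (2 * C')) (by positivity)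
  set K : ℝ := ∑ ℓ ∈ Finset.range N₁, u ℓ * δ ℓ with hK
  have hK0 : 0 ≤ K := Finset.sum_nonneg fun ℓ _ => mul_nonneg (hu ℓ) (hδ0 ℓ)
  have key : ∀ n, N₁ ≤ n → (∑ ℓ ∈ Finset.range n, u ℓ * δ ℓ) ≤ K + ε / 2 * n := by
    intro n hn
    have hsplit : (∑ ℓ ∈ Finset.range n, u ℓ * δ ℓ)
        = K + ∑ ℓ ∈ Finset.Ico N₁ n, u ℓ * δ ℓ :=
      (Finset.sum_range_add_sum_Ico _ hn).symm
    rw [hsplit]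
    have h2 : (∑ ℓ ∈ Finset.Ico N₁ n, u ℓ * δ ℓ)
        ≤ ∑ ℓ ∈ Finset.Ico N₁ n, u ℓ * (ε / (2 * C')) := by
      refine Finset.sum_le_sum fun ℓ hℓ => ?_
      have hℓ' : N₁ ≤ ℓ := (Finset.mem_Ico.mp hℓ).1
      have := hN₁ ℓ hℓ'
      rw [Real.dist_eq, sub_zero, abs_of_nonneg (hδ0 ℓ)] at this
      exact mul_le_mul_of_nonneg_left this.le (hu ℓ)
    have h3 : (∑ ℓ ∈ Finset.Ico N₁ n, u ℓ * (ε / (2 * C')))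
        ≤ ε / 2 * n := by
      rw [← Finset.sum_mul]
      have h4 : (∑ ℓ ∈ Finset.Ico N₁ n, u ℓ) ≤ C * n := by
        refine le_trans ?_ (hC n)
        rw [Finset.range_eq_Ico]
        refine Finset.sum_le_sum_of_subset_of_nonneg ?_ (fun i _ _ => hu i)
        exact Finset.Ico_subset_Ico (Nat.zero_le _) le_rfl
      calc (∑ ℓ ∈ Finset.Ico N₁ n, u ℓ) * (ε / (2 * C'))
          ≤ C * n * (ε / (2 * C')) := by
            refine mul_le_mul_of_nonneg_right h4 (by positivity)
        _ ≤ ε / 2 * n := by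
            have hnn : (0:ℝ) ≤ n := Nat.cast_nonneg n
            have h5 : C * ↑n * (ε / (2 * C')) ≤ C' * ↑n * (ε / (2 * C')) := by
              apply mul_le_mul_of_nonneg_right _ (by positivity)
              nlinarith
            have h6 : C' * ↑n * (ε / (2 * C')) = ε / 2 * ↑n := by
              field_simp
            linarith
    linarith
  obtain ⟨N₂, hN₂⟩ := exists_nat_gt (2 * K / ε)
  refine ⟨max N₁ (max N₂ 1), fun n hn => ?_⟩
  have hn1 : N₁ ≤ n := le_trans (le_max_left _ _) hn
  have hn2 : N₂ ≤ n := le_trans (le_trans (le_max_left _ _) (le_max_right _ _)) hn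
  have hn3 : 1 ≤ n := le_trans (le_trans (le_max_right _ _) (le_max_right _ _)) hn
  have hnR : (1:ℝ) ≤ n := by exact_mod_cast hn3
  have hnpos : (0:ℝ) < n := by linarith
  rw [Real.dist_eq, sub_zero]
  have hnonneg : 0 ≤ (∑ ℓ ∈ Finset.range n, u ℓ * δ ℓ) / (n:ℝ) :=
    div_nonneg (Finset.sum_nonneg fun ℓ _ => mul_nonneg (hu ℓ) (hδ0 ℓ)) hnpos.le
  rw [abs_of_nonneg hnonneg]
  have hKn : K / n < ε / 2 := by
    have : 2 * K / ε < (n:ℝ) := lt_of_lt_of_le hN₂ (by exact_mod_cast hn2)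
    rw [div_lt_iff₀ hε] at this
    rw [div_lt_iff₀ hnpos]
    nlinarith
  calc (∑ ℓ ∈ Finset.range n, u ℓ * δ ℓ) / (n:ℝ)
      ≤ (K + ε / 2 * n) / n := by
        gcongr
        exact key n hn1
    _ = K / n + ε / 2 := by
        rw [add_div, mul_div_assoc, div_self hnpos.ne', mul_one]
    _ < ε / 2 + ε / 2 := by linarith
    _ = ε := by ring

lemma lemB {u v : ℕ → ℝ} {a b : ℝ} (hu : ∀ ℓ, 0 ≤ u ℓ)
    (hS : Tendsto (fun n => (∑ ℓ ∈ Finset.range n, u ℓ) / (n:ℝ)) atTop (𝓝 a))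
    (hv : Tendsto (fun ℓ => v ℓ / (ℓ:ℝ)) atTop (𝓝 b)) :
    Tendsto (fun n => (∑ ℓ ∈ Finset.range n, u ℓ * v ℓ) / (n:ℝ)^2) atTop
      (𝓝 (a * b / 2)) := by
  set S : ℕ → ℝ := fun n => ∑ ℓ ∈ Finset.range n, u ℓ with hSdef
  -- uniform linear bound on S
  obtain ⟨C, hCpos, hC⟩ : ∃ C : ℝ, 0 < C ∧ ∀ n, S n ≤ C * n := by
    obtain ⟨N₀, hN₀⟩ := Metric.tendsto_atTop.mp hS 1 one_pos
    set M := max N₀ 1 with hM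
    refine ⟨max (|a| + 1) (S M + 1), lt_of_lt_of_le (by positivity) (le_max_left _ _), ?_⟩
    intro n
    have hSmono : Monotone S := fun i j hij =>
      Finset.sum_le_sum_of_subset_of_nonneg (Finset.range_subset_range.mpr hij) fun ℓ _ _ => hu ℓ
    have hSnn : ∀ k, 0 ≤ S k := fun k => Finset.sum_nonneg fun ℓ _ => hu ℓ
    rcases Nat.eq_zero_or_pos n with h0 | h0
    · simp [h0, hSdef]
    have hn1 : (1:ℝ) ≤ n := by exact_mod_cast h0
    rcases le_or_gt M n with hMn | hMn
    · have := hN₀ n (le_trans (le_max_left _ _) hMn)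
      rw [Real.dist_eq] at this
      have habs := abs_sub_lt_iff.mp this
      have hnpos : (0:ℝ) < n := by linarith
      have : S n / n < a + 1 := by linarith [habs.1]
      have h2 : S n < (a + 1) * n := by
        rw [div_lt_iff₀ hnpos] at this; linarith
      have : (a+1) * n ≤ max (|a| + 1) (S M + 1) * n := by
        apply mul_le_mul_of_nonneg_right _ (by linarith)
        exact le_trans (by linarith [le_abs_self a]) (le_max_left _ _)
      linarith
    · have h2 : S n ≤ S M := hSmono hMn.le
      have h3 : S M + 1 ≤ max (|a| + 1) (S M + 1) := le_max_right _ _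
      have h4 : max (|a| + 1) (S M + 1) * 1 ≤ max (|a| + 1) (S M + 1) * n := by
        apply mul_le_mul_of_nonneg_left hn1
        exact le_trans (by positivity : (0:ℝ) ≤ |a| + 1) (le_max_left _ _)
      linarith
  -- the weighted sum W
  set W : ℕ → ℝ := fun n => ∑ ℓ ∈ Finset.range n, u ℓ * ℓ with hWdef
  have habel : ∀ n : ℕ, W n = n * S n - ∑ j ∈ Finset.range n, S (j + 1) := by
    intro n
    induction n with
    | zero => simp [hWdef, hSdef]
    | succ n ih =>
      have hSn : S (n + 1) = S n + u n := Finset.sum_range_succ _ _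
      have hWn : W (n + 1) = W n + u n * n := Finset.sum_range_succ _ _
      rw [hWn, ih, Finset.sum_range_succ, hSn]
      push_cast
      ring
  have hW : Tendsto (fun n => W n / (n:ℝ)^2) atTop (𝓝 (a / 2)) := by
    have h1 : Tendsto (fun n => S (n+1) / (n:ℝ)) atTop (𝓝 a) := succ_div hS
    have h2 : Tendsto (fun n => (∑ j ∈ Finset.range n, S (j+1)) / (n:ℝ)^2) atTop (𝓝 (a/2)) :=
      lemA h1
    have h3 : Tendsto (fun n : ℕ => (n:ℝ) * S n / (n:ℝ)^2) atTop (𝓝 a) := by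
      refine Tendsto.congr' ?_ hS
      filter_upwards [eventually_ge_atTop 1] with n hn
      have hn' : (n:ℝ) ≠ 0 := by
        have : (1:ℝ) ≤ n := by exact_mod_cast hn
        linarith
      field_simp
      ring
    have := h3.sub h2
    have heq : a - a / 2 = a / 2 := by ring
    rw [heq] at this
    refine this.congr fun n => ?_
    rw [habel n, sub_div]
  -- the error term
  set δ : ℕ → ℝ := fun ℓ => if ℓ = 0 then 0 else |v ℓ - b * ℓ| / ℓ with hδdef
  have hδ0 : ∀ ℓ, 0 ≤ δ ℓ := by
    intro ℓ
    rcases Nat.eq_zero_or_pos ℓ with h | h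
    · simp [hδdef, h]
    · have : ℓ ≠ 0 := Nat.pos_iff_ne_zero.mp h
      simp only [hδdef, this, if_false]
      positivity
  have hδt : Tendsto δ atTop (𝓝 0) := by
    have h1 : Tendsto (fun ℓ => v ℓ / (ℓ:ℝ) - b) atTop (𝓝 (b - b)) := hv.sub tendsto_const_nhds
    rw [sub_self] at h1
    have h2 := h1.abs
    rw [abs_zero] at h2
    refine Tendsto.congr' ?_ h2
    filter_upwards [eventually_ge_atTop 1] with ℓ hℓ
    have hℓ0 : ℓ ≠ 0 := Nat.one_le_iff_ne_zero.mp hℓ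
    have hℓR : (0:ℝ) < ℓ := by exact_mod_cast Nat.pos_of_ne_zero hℓ0
    simp only [hδdef, hℓ0, if_false]
    have hq : v ℓ / (ℓ:ℝ) - b = (v ℓ - b * ℓ) / ℓ := by field_simp
    rw [hq, abs_div, abs_of_nonneg hℓR.le]
  have herr : Tendsto (fun n => (∑ ℓ ∈ Finset.range n, u ℓ * (v ℓ - b * ℓ)) / (n:ℝ)^2)
      atTop (𝓝 0) := by
    have hE := lemE hu hδ0 hδt hC
    have hconst := const_div_sq (u 0 * |v 0|)
    have hg := hconst.add hE
    rw [add_zero] at hg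
    apply squeeze_zero_norm _ hg
    intro n
    rcases Nat.eq_zero_or_pos n with h0 | h0
    · simp [h0]
    have hnR : (0:ℝ) < n := by exact_mod_cast h0
    have hbound : |∑ ℓ ∈ Finset.range n, u ℓ * (v ℓ - b * ℓ)|
        ≤ u 0 * |v 0| + n * ∑ ℓ ∈ Finset.range n, u ℓ * δ ℓ := by
      have hterm : ∀ ℓ ∈ Finset.range n, |u ℓ * (v ℓ - b * ℓ)|
          ≤ (if ℓ = 0 then u 0 * |v 0| else 0) + n * (u ℓ * δ ℓ) := by
        intro ℓ hℓ
        rw [abs_mul, abs_of_nonneg (hu ℓ)]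
        rcases Nat.eq_zero_or_pos ℓ with h | h
        · simp [h, hδdef]
        · have hℓ0 : ℓ ≠ 0 := Nat.pos_iff_ne_zero.mp h
          have hℓR : (0:ℝ) < ℓ := by exact_mod_cast h
          have hle : (ℓ:ℝ) ≤ n := by exact_mod_cast (Finset.mem_range.mp hℓ).le
          simp only [hℓ0, if_false, zero_add, hδdef]
          have heq : u ℓ * |v ℓ - b * ℓ| = (u ℓ * (|v ℓ - b * ℓ| / ℓ)) * ℓ := by
            field_simp
          rw [heq]
          calc (u ℓ * (|v ℓ - b * ℓ| / ℓ)) * ℓ ≤ (u ℓ * (|v ℓ - b * ℓ| / ℓ)) * n := by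
                exact mul_le_mul_of_nonneg_left hle
                  (mul_nonneg (hu ℓ) (div_nonneg (abs_nonneg _) hℓR.le))
            _ = n * (u ℓ * (|v ℓ - b * ℓ| / ℓ)) := by ring
      have hite : (∑ ℓ ∈ Finset.range n, if ℓ = 0 then u 0 * |v 0| else 0)
          = u 0 * |v 0| := by
        rw [Finset.sum_eq_single_of_mem 0 (Finset.mem_range.mpr h0)]
        · simp
        · intro bb _ hbb; simp [hbb]
      calc |∑ ℓ ∈ Finset.range n, u ℓ * (v ℓ - b * ℓ)|
          ≤ ∑ ℓ ∈ Finset.range n, |u ℓ * (v ℓ - b * ℓ)| := Finset.abs_sum_le_sum_abs _ _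
        _ ≤ ∑ ℓ ∈ Finset.range n, ((if ℓ = 0 then u 0 * |v 0| else 0) + n * (u ℓ * δ ℓ)) :=
            Finset.sum_le_sum hterm
        _ = u 0 * |v 0| + n * ∑ ℓ ∈ Finset.range n, u ℓ * δ ℓ := by
            rw [Finset.sum_add_distrib, hite, ← Finset.mul_sum]
    rw [Real.norm_eq_abs, abs_div, abs_of_nonneg (by positivity : (0:ℝ) ≤ (n:ℝ)^2)]
    calc |∑ ℓ ∈ Finset.range n, u ℓ * (v ℓ - b * ℓ)| / (n:ℝ)^2
        ≤ (u 0 * |v 0| + n * ∑ ℓ ∈ Finset.range n, u ℓ * δ ℓ) / (n:ℝ)^2 := by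
          gcongr
      _ = u 0 * |v 0| / (n:ℝ)^2 + (∑ ℓ ∈ Finset.range n, u ℓ * δ ℓ) / n := by
          rw [add_div]
          congr 1
          rw [pow_two, ← div_div, mul_div_assoc, mul_comm, mul_div_assoc, div_self hnR.ne',
            mul_one]
  -- combine
  have hsum : ∀ n : ℕ, (∑ ℓ ∈ Finset.range n, u ℓ * v ℓ)
      = b * W n + ∑ ℓ ∈ Finset.range n, u ℓ * (v ℓ - b * ℓ) := by
    intro n
    rw [hWdef, Finset.mul_sum, ← Finset.sum_add_distrib]
    exact Finset.sum_congr rfl fun ℓ _ => by ring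
  have hfinal := (hW.const_mul b).add herr
  rw [add_zero] at hfinal
  have hval : b * (a / 2) = a * b / 2 := by ring
  rw [hval] at hfinal
  refine hfinal.congr fun n => ?_
  rw [hsum n, add_div, mul_div_assoc]


variable {Ω : Type*} [MeasurableSpace Ω]

lemma birkhoffSum_measurable (T : Ω ≃ᵐ Ω) {g : Ω → ℝ} (hg : Measurable g) (n : ℕ) :
    Measurable (birkhoffSum T g n) :=
  Finset.measurable_sum _ fun k _ => hg.comp (T.measurable.iterate k)

lemma birkhoffSum_integrable (T : Ω ≃ᵐ Ω) {μ : Measure Ω} (hP : MeasurePreserving T μ μ)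
    {g : Ω → ℝ} (hg : Measurable g) (hgi : Integrable g μ) (n : ℕ) :
    Integrable (birkhoffSum T g n) μ := by
  have : ∀ k : ℕ, Integrable (fun ω => g (T^[k] ω)) μ := by
    intro k
    exact (MeasurePreserving.integrable_comp (hP.iterate k)
      hgi.aestronglyMeasurable).mpr hgi
  exact integrable_finset_sum _ fun k _ => this k

/-- Garsia's maximal ergodic theorem. -/
lemma maximal_ergodic (T : Ω ≃ᵐ Ω) (μ : Measure Ω) (hP : MeasurePreserving T μ μ)
    {g : Ω → ℝ} (hg : Measurable g) (hgi : Integrable g μ) :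
    0 ≤ ∫ ω in {ω | ∃ n : ℕ, 0 < birkhoffSum T g (n + 1) ω}, g ω ∂μ := by
  classical
  -- M n = max of birkhoff sums S_0,...,S_n  (S_0 = 0)
  set M : ℕ → Ω → ℝ := fun n => Nat.rec (fun _ => 0)
    (fun n Mn ω => max (Mn ω) (birkhoffSum T g (n + 1) ω)) n with hM
  have hM0 : ∀ ω, M 0 ω = 0 := fun _ => rfl
  have hMsucc : ∀ n ω, M (n + 1) ω = max (M n ω) (birkhoffSum T g (n + 1) ω) :=
    fun n ω => rfl
  have hMnonneg : ∀ n ω, 0 ≤ M n ω := by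
    intro n
    induction n with
    | zero => intro ω; simp [hM0]
    | succ n ih => intro ω; rw [hMsucc]; exact le_max_of_le_left (ih ω)
  have hMmono : ∀ n ω, M n ω ≤ M (n + 1) ω := fun n ω => by
    rw [hMsucc]; exact le_max_left _ _
  have hMmeas : ∀ n, Measurable (M n) := by
    intro n
    induction n with
    | zero => exact measurable_const
    | succ n ih =>
      have : M (n+1) = fun ω => max (M n ω) (birkhoffSum T g (n + 1) ω) := by
        funext ω; exact hMsucc n ω
      rw [this]
      exact ih.max (birkhoffSum_measurable T hg (n+1))
  have hMint : ∀ n, Integrable (M n) μ := by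
    intro n
    induction n with
    | zero =>
      have : M 0 = fun _ => (0:ℝ) := by funext ω; exact hM0 ω
      rw [this]; exact integrable_zero _ _ _
    | succ n ih =>
      have : M (n+1) = fun ω => max (M n ω) (birkhoffSum T g (n + 1) ω) := by
        funext ω; exact hMsucc n ω
      rw [this]
      exact ih.sup (birkhoffSum_integrable T hP hg hgi (n+1))
  -- key inequality
  have hkey : ∀ n ω, M (n + 1) ω ≤ max 0 (g ω + M n (T ω)) := by
    intro n
    induction n with
    | zero =>
      intro ω
      rw [hMsucc 0 ω, hM0 ω, hM0 (T ω), birkhoffSum_one, add_zero]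
    | succ n ih =>
      intro ω
      rw [hMsucc]
      apply max_le
      · exact le_trans (ih ω) (max_le_max le_rfl (by linarith [hMmono n (T ω)]))
      · have hsucc : birkhoffSum T g (n + 2) ω = g ω + birkhoffSum T g (n + 1) (T ω) :=
          birkhoffSum_succ' T g (n+1) ω
        rw [hsucc]
        refine le_max_of_le_right ?_
        have : birkhoffSum T g (n + 1) (T ω) ≤ M (n+1) (T ω) := by
          rw [hMsucc]; exact le_max_right _ _
        linarith
  -- on A n := {0 < M (n+1)} : g ≥ M(n+1) - M(n+1)∘T
  set A : ℕ → Set Ω := fun n => {ω | 0 < M (n + 1) ω} with hA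
  have hAmeas : ∀ n, MeasurableSet (A n) := fun n =>
    measurableSet_lt measurable_const (hMmeas (n+1))
  have hstep : ∀ n, 0 ≤ ∫ ω in A n, g ω ∂μ := by
    intro n
    have hMT : Integrable (fun ω => M (n+1) (T ω)) μ :=
      (MeasurePreserving.integrable_comp hP (hMint (n+1)).aestronglyMeasurable).mpr
        (hMint (n+1))
    have hsub : Integrable (fun ω => M (n+1) ω - M (n+1) (T ω)) μ := (hMint (n+1)).sub hMT
    have h1 : ∫ ω in A n, (M (n+1) ω - M (n+1) (T ω)) ∂μ ≤ ∫ ω in A n, g ω ∂μ := by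
      apply setIntegral_mono_on hsub.integrableOn
        hgi.integrableOn (hAmeas n)
      intro ω hω
      have hpos : 0 < M (n+1) ω := hω
      have h2 : M (n+1) ω ≤ g ω + M n (T ω) := by
        have hk := hkey n ω
        rcases le_or_gt (g ω + M n (T ω)) 0 with hx | hx
        · rw [max_eq_left hx] at hk; linarith
        · rw [max_eq_right hx.le] at hk; exact hk
      have h3 : M n (T ω) ≤ M (n+1) (T ω) := hMmono n (T ω)
      linarith
    have h2 : ∫ ω, (M (n+1) ω - M (n+1) (T ω)) ∂μ ≤
        ∫ ω in A n, (M (n+1) ω - M (n+1) (T ω)) ∂μ := by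
      rw [← integral_add_compl (hAmeas n) hsub]
      have : ∫ ω in (A n)ᶜ, (M (n+1) ω - M (n+1) (T ω)) ∂μ ≤ 0 := by
        apply setIntegral_nonpos (hAmeas n).compl
        intro ω hω
        have : ¬ (0 < M (n+1) ω) := hω
        have hz : M (n+1) ω = 0 := le_antisymm (not_lt.mp this) (hMnonneg (n+1) ω)
        rw [hz]
        simp [hMnonneg (n+1) (T ω)]
      linarith
    have h3 : ∫ ω, (M (n+1) ω - M (n+1) (T ω)) ∂μ = 0 := by
      rw [integral_sub (hMint (n+1)) hMT]
      rw [MeasurePreserving.integral_comp hP T.measurableEmbedding (M (n+1))]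
      ring
    linarith
  -- pass to the union
  have hmono : Monotone A := by
    intro i j hij
    have : ∀ k, A i ⊆ A (i + k) := by
      intro k
      induction k with
      | zero => exact subset_rfl
      | succ k ih =>
        refine ih.trans fun ω hω => ?_
        have hω' : 0 < M (i + k + 1) ω := hω
        show 0 < M (i + (k+1) + 1) ω
        have : i + (k+1) + 1 = (i + k + 1) + 1 := by omega
        rw [this]
        exact lt_of_lt_of_le hω' (hMmono (i+k+1) ω)
    have hk := this (j - i)
    rwa [Nat.add_sub_cancel' hij] at hk
  have hU : {ω | ∃ n : ℕ, 0 < birkhoffSum T g (n + 1) ω} = ⋃ n, A n := by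
    ext ω
    simp only [Set.mem_setOf_eq, Set.mem_iUnion]
    constructor
    · rintro ⟨n, hn⟩
      refine ⟨n, ?_⟩
      have : birkhoffSum T g (n+1) ω ≤ M (n+1) ω := by
        rw [hMsucc n ω]; exact le_max_right _ _
      exact lt_of_lt_of_le hn this
    · rintro ⟨n, hn⟩
      -- if M (n+1) ω > 0 then some birkhoff sum is positive
      induction n with
      | zero =>
        have hn' : 0 < M (0 + 1) ω := hn
        rw [hMsucc 0 ω, hM0 ω] at hn'
        rcases lt_max_iff.mp hn' with h | h
        · exact absurd h (lt_irrefl 0)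
        · exact ⟨0, h⟩
      | succ n ih =>
        have hn' : 0 < M ((n + 1) + 1) ω := hn
        rw [hMsucc (n+1) ω] at hn'
        rcases lt_max_iff.mp hn' with h | h
        · exact ih h
        · exact ⟨n + 1, h⟩
  rw [hU]
  have := tendsto_setIntegral_of_monotone hAmeas hmono (hgi.integrableOn)
  exact ge_of_tendsto' this hstep

lemma birkhoffSum_sub_const (T : Ω ≃ᵐ Ω) (g : Ω → ℝ) (s : ℝ) (n : ℕ) (ω : Ω) :
    birkhoffSum T (fun ω' => g ω' - s) n ω = birkhoffSum T g n ω - n * s := by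
  simp only [birkhoffSum, Finset.sum_sub_distrib, Finset.sum_const, Finset.card_range,
    nsmul_eq_mul, mul_one]

lemma birkhoff_upper {μ : Measure Ω} [IsProbabilityMeasure μ] {T : Ω ≃ᵐ Ω}
    (hT : Ergodic T μ) {g : Ω → ℝ} (hg : Measurable g) (hgi : Integrable g μ) {r : ℝ}
    (hr : ∫ ω, g ω ∂μ < r) :
    ∀ᵐ ω ∂μ, ∀ᶠ n : ℕ in atTop, birkhoffSum T g n ω / n < r := by
  obtain ⟨s₀, hs₀1, hs₀2⟩ := exists_rat_btwn hr
  set D : Set Ω := {ω | ∀ s : ℚ, (s:ℝ) < r → ∀ N : ℕ,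
    ∃ n, N ≤ n ∧ (s:ℝ) * n < birkhoffSum T g n ω} with hD
  have hDmeas : MeasurableSet D := by
    have hEq : D = ⋂ (s : ℚ), ⋂ (_ : (s:ℝ) < r), ⋂ (N : ℕ), ⋃ (n : ℕ), ⋃ (_ : N ≤ n),
        {ω | (s:ℝ) * n < birkhoffSum T g n ω} := by
      ext ω
      simp [hD, Set.mem_iInter, Set.mem_iUnion]
    rw [hEq]
    exact MeasurableSet.iInter fun s => MeasurableSet.iInter fun _ =>
      MeasurableSet.iInter fun N => MeasurableSet.iUnion fun n =>
      MeasurableSet.iUnion fun _ =>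
      measurableSet_lt measurable_const (birkhoffSum_measurable T hg n)
  have hDinv : T ⁻¹' D = D := by
    ext ω
    simp only [Set.mem_preimage, hD, Set.mem_setOf_eq]
    constructor
    · intro h s hs N
      obtain ⟨s', hss', hs'r⟩ := exists_rat_btwn hs
      have hposd : (0:ℝ) < (s':ℝ) - s := by
        have : (s:ℝ) < s' := by exact_mod_cast hss'
        linarith
      obtain ⟨N₀, hN₀⟩ := exists_nat_ge (((s:ℝ) - g ω) / ((s':ℝ) - s))
      obtain ⟨n, hnN, hn⟩ := h s' (by exact_mod_cast hs'r) (max N N₀)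
      refine ⟨n + 1, le_trans (le_trans (le_max_left _ _) hnN) (Nat.le_succ n), ?_⟩
      rw [birkhoffSum_succ' T g n ω]
      have hnN₀ : (N₀:ℝ) ≤ n := by exact_mod_cast le_trans (le_max_right _ _) hnN
      have hkey : (s:ℝ) - g ω ≤ ((s':ℝ) - s) * n := by
        rw [div_le_iff₀ hposd] at hN₀
        nlinarith
      push_cast
      nlinarith
    · intro h s hs N
      obtain ⟨s', hss', hs'r⟩ := exists_rat_btwn hs
      have hposd : (0:ℝ) < (s':ℝ) - s := by
        have : (s:ℝ) < s' := by exact_mod_cast hss'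
        linarith
      obtain ⟨N₀, hN₀⟩ := exists_nat_ge ((g ω - (s':ℝ)) / ((s':ℝ) - s))
      obtain ⟨n, hnN, hn⟩ := h s' (by exact_mod_cast hs'r) (max (N + 1) (N₀ + 1))
      obtain ⟨m, rfl⟩ : ∃ m, n = m + 1 := ⟨n - 1, by omega⟩
      refine ⟨m, by omega, ?_⟩
      rw [birkhoffSum_succ' T g m ω] at hn
      have hmN₀ : (N₀:ℝ) ≤ m := by
        have : N₀ + 1 ≤ m + 1 := le_trans (le_max_right _ _) hnN
        exact_mod_cast Nat.le_of_succ_le_succ this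
      have hkey : g ω - (s':ℝ) ≤ ((s':ℝ) - s) * m := by
        rw [div_le_iff₀ hposd] at hN₀
        nlinarith
      push_cast at hn ⊢
      nlinarith
  rcases hT.toPreErgodic.prob_eq_zero_or_one hDmeas hDinv with h0 | h1
  · -- μ D = 0 : almost every point is outside D, giving the upper bound
    have hae : ∀ᵐ ω ∂μ, ω ∉ D := by
      rw [← measure_eq_zero_iff_ae_notMem]; exact h0
    filter_upwards [hae] with ω hω
    rw [hD, Set.mem_setOf_eq] at hω
    push_neg at hω
    obtain ⟨s, hsr, N, hN⟩ := hω
    rw [eventually_atTop]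
    refine ⟨max N 1, fun n hn => ?_⟩
    have h1 : birkhoffSum T g n ω ≤ (s:ℝ) * n :=
      hN n (le_trans (le_max_left _ _) hn)
    have hn1 : 1 ≤ n := le_trans (le_max_right _ _) hn
    have hnR : (0:ℝ) < n := by exact_mod_cast hn1
    rw [div_lt_iff₀ hnR]
    calc birkhoffSum T g n ω ≤ (s:ℝ) * n := h1
      _ < r * n := by exact mul_lt_mul_of_pos_right hsr hnR
  · -- μ D = 1 : contradiction with the maximal ergodic theorem
    exfalso
    have hPres : MeasurePreserving T (μ.restrict D) (μ.restrict D) := by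
      refine ⟨T.measurable, ?_⟩
      calc Measure.map T (μ.restrict D) = Measure.map T (μ.restrict (T ⁻¹' D)) := by
            rw [hDinv]
        _ = (Measure.map T μ).restrict D := (Measure.restrict_map T.measurable hDmeas).symm
        _ = μ.restrict D := by rw [hT.toMeasurePreserving.map_eq]
    set h : Ω → ℝ := fun ω => g ω - s₀ with hh
    have hhm : Measurable h := hg.sub measurable_const
    have hhi : Integrable h (μ.restrict D) := (hgi.sub (integrable_const _)).restrict
    have hmax := maximal_ergodic T (μ.restrict D) hPres hhm hhi
    have hAm : MeasurableSet {ω | ∃ n : ℕ, 0 < birkhoffSum T h (n+1) ω} := by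
      rw [Set.setOf_exists]
      exact MeasurableSet.iUnion fun n =>
        measurableSet_lt measurable_const (birkhoffSum_measurable T hhm (n+1))
    have hDA : D ⊆ {ω | ∃ n : ℕ, 0 < birkhoffSum T h (n+1) ω} := by
      intro ω hω
      obtain ⟨n, hn1, hn2⟩ := hω s₀ hs₀2 1
      obtain ⟨m, rfl⟩ : ∃ m, n = m + 1 := ⟨n - 1, by omega⟩
      refine ⟨m, ?_⟩
      rw [hh, birkhoffSum_sub_const]
      linarith
    have hint : ∫ ω in {ω | ∃ n : ℕ, 0 < birkhoffSum T h (n+1) ω}, h ω ∂(μ.restrict D)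
        = ∫ ω in D, h ω ∂μ := by
      rw [Measure.restrict_restrict hAm, Set.inter_eq_self_of_subset_right hDA]
    rw [hint] at hmax
    have hcompl : μ Dᶜ = 0 := by
      rw [measure_compl hDmeas (by simp), h1]
      simp
    have hrestr0 : μ.restrict Dᶜ = 0 := Measure.restrict_eq_zero.mpr hcompl
    have hDg : ∫ ω in D, g ω ∂μ = ∫ ω, g ω ∂μ := by
      rw [← integral_add_compl hDmeas hgi, hrestr0, integral_zero_measure, add_zero]
    have hDh : ∫ ω in D, h ω ∂μ = ∫ ω in D, g ω ∂μ - (s₀:ℝ) := by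
      rw [hh]
      rw [integral_sub hgi.restrict (integrable_const _), setIntegral_const]
      rw [measureReal_def, h1]
      simp
    rw [hDh, hDg] at hmax
    linarith

theorem birkhoff_ergodic {μ : Measure Ω} [IsProbabilityMeasure μ] {T : Ω ≃ᵐ Ω}
    (hT : Ergodic T μ) {g : Ω → ℝ} (hg : Measurable g) (hgi : Integrable g μ) :
    ∀ᵐ ω ∂μ, Tendsto (fun n : ℕ => birkhoffSum T g n ω / n) atTop (𝓝 (∫ ω, g ω ∂μ)) := by
  set I : ℝ := ∫ ω, g ω ∂μ with hI
  -- countably many upper bounds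
  have hupper : ∀ᵐ ω ∂μ, ∀ q : ℚ, I < q → ∀ᶠ n : ℕ in atTop, birkhoffSum T g n ω / n < q := by
    rw [ae_all_iff]
    intro q
    rcases lt_or_ge I q with hq | hq
    · exact (birkhoff_upper hT hg hgi hq).mono fun ω h _ => h
    · filter_upwards with ω hcon
      exact absurd hcon (not_lt.mpr hq)
  have hlowerI : ∫ ω, -g ω ∂μ = -I := by rw [hI, integral_neg]
  have hlower : ∀ᵐ ω ∂μ, ∀ q : ℚ, -I < q →
      ∀ᶠ n : ℕ in atTop, birkhoffSum T (fun ω' => -g ω') n ω / n < q := by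
    rw [ae_all_iff]
    intro q
    rcases lt_or_ge (-I) q with hq | hq
    · refine (birkhoff_upper hT hg.neg hgi.neg ?_).mono fun ω h _ => h
      show ∫ ω, -g ω ∂μ < q
      rw [hlowerI]; exact hq
    · filter_upwards with ω hcon
      exact absurd hcon (not_lt.mpr hq)
  filter_upwards [hupper, hlower] with ω hu hl
  have hneg : ∀ n : ℕ, birkhoffSum T (fun ω' => -g ω') n ω = - birkhoffSum T g n ω := by
    intro n
    simp [birkhoffSum, Finset.sum_neg_distrib]
  rw [tendsto_order]
  constructor
  · intro b hb
    obtain ⟨q, hq1, hq2⟩ := exists_rat_btwn (by linarith : -I < -b)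
    filter_upwards [hl q hq1] with n hn
    rw [hneg n] at hn
    have : -(q:ℝ) < birkhoffSum T g n ω / n := by
      rw [neg_div] at hn
      linarith
    linarith
  · intro b hb
    obtain ⟨q, hq1, hq2⟩ := exists_rat_btwn hb
    filter_upwards [hu q hq1] with n hn
    linarith



lemma sum_Icc_one (h : ℕ → ℝ) (n : ℕ) :
    ∑ k ∈ Finset.Icc 1 n, h k = ∑ j ∈ Finset.range n, h (j + 1) := by
  induction n with
  | zero => simp
  | succ n ih =>
    rw [Finset.sum_Icc_succ_top (by omega : 1 ≤ n + 1), ih, Finset.sum_range_succ]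

lemma ergodic_symm {μ : Measure Ω} (T : Ω ≃ᵐ Ω) (hT : Ergodic T μ) :
    Ergodic (⇑T.symm) μ := by
  refine ⟨hT.toMeasurePreserving.symm T, ⟨fun s hs hinv => ?_⟩⟩
  refine hT.aeconst_set hs ?_
  conv_lhs => rw [← hinv]
  rw [← Set.preimage_comp]
  have : ⇑T.symm ∘ ⇑T = id := by
    funext x; simp
  rw [this, Set.preimage_id]

lemma ae_comp_iterate {μ : Measure Ω} {f : Ω → Ω} (hP : MeasurePreserving f μ μ)
    {p : Ω → Prop} (hpm : MeasurableSet {x | p x}) (hp : ∀ᵐ ω ∂μ, p ω) (k : ℕ) :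
    ∀ᵐ ω ∂μ, p (f^[k] ω) := by
  have hPk := hP.iterate k
  rw [← ae_map_iff hPk.measurable.aemeasurable hpm, hPk.map_eq]
  exact hp

end Aux

theorem stmt_2 {Ω : Type*} [MeasurableSpace Ω] (μ : Measure Ω) [IsProbabilityMeasure μ]
    (T : Ω ≃ᵐ Ω) (hT : Ergodic T μ)
    (c : Ω → ℝ) (hcmeas : Measurable c) (hc : ∀ᵐ ω ∂μ, 0 < c ω)
    (cbar : Ω → ℝ) (hcbar : ∀ ω, cbar ω = c ω + c (T.symm ω))
    (hcint : Integrable c μ) (hcinvint : Integrable (fun ω => (c ω)⁻¹) μ)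
    (f : Ω → ℤ → ℝ)
    (hf0 : ∀ ω, f ω 0 = 0)
    (hfpos : ∀ ω, ∀ m : ℤ, 1 ≤ m →
      f ω m = ∑ ℓ ∈ Finset.range m.toNat,
        (c (T^[ℓ] ω))⁻¹ * ∑ k ∈ Finset.Icc 1 ℓ, cbar (T^[k] ω))
    (hfneg : ∀ ω, ∀ m : ℤ, m ≤ -1 →
      f ω m = ∑ ℓ ∈ Finset.Icc 1 (-m).toNat,
        (c (T.symm^[ℓ] ω))⁻¹ * ∑ k ∈ Finset.range ℓ, cbar (T.symm^[k] ω)) :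
    ∀ᵐ ω ∂μ,
      Tendsto (fun m : ℤ => f ω m / (m : ℝ) ^ 2) atTop
        (nhds ((1 / 2) * (∫ ω', (c ω')⁻¹ ∂μ) * (∫ ω', cbar ω' ∂μ))) ∧
      Tendsto (fun m : ℤ => f ω m / (m : ℝ) ^ 2) atBot
        (nhds ((1 / 2) * (∫ ω', (c ω')⁻¹ ∂μ) * (∫ ω', cbar ω' ∂μ))) := by
  have hTsymm : Ergodic (⇑T.symm) μ := ergodic_symm T hT
  have hcbarfun : cbar = fun ω => c ω + c (T.symm ω) := funext hcbar
  have hcbarmeas : Measurable cbar := by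
    rw [hcbarfun]; exact hcmeas.add (hcmeas.comp T.symm.measurable)
  have hcsymm : Integrable (fun ω => c (T.symm ω)) μ :=
    ((hT.toMeasurePreserving.symm T).integrable_comp hcint.aestronglyMeasurable).mpr hcint
  have hcbarint : Integrable cbar μ := by
    rw [hcbarfun]; exact hcint.add hcsymm
  have hcinvmeas : Measurable (fun ω => (c ω)⁻¹) := hcmeas.inv
  set I₁ : ℝ := ∫ ω', (c ω')⁻¹ ∂μ with hI₁
  set I₂ : ℝ := ∫ ω', cbar ω' ∂μ with hI₂
  -- four birkhoff theorems
  have h1 := birkhoff_ergodic hT hcinvmeas hcinvint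
  have h2 := birkhoff_ergodic hT hcbarmeas hcbarint
  have h3 := birkhoff_ergodic hTsymm hcinvmeas hcinvint
  have h4 := birkhoff_ergodic hTsymm hcbarmeas hcbarint
  -- nonnegativity along orbits
  have hposset : MeasurableSet {x | 0 < c x} := measurableSet_lt measurable_const hcmeas
  have hpos1 : ∀ᵐ ω ∂μ, ∀ k : ℕ, 0 < c (T^[k] ω) := by
    rw [ae_all_iff]
    exact fun k => ae_comp_iterate hT.toMeasurePreserving hposset hc k
  have hpos2 : ∀ᵐ ω ∂μ, ∀ k : ℕ, 0 < c (T.symm^[k] ω) := by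
    rw [ae_all_iff]
    exact fun k => ae_comp_iterate (hT.toMeasurePreserving.symm T) hposset hc k
  filter_upwards [h1, h2, h3, h4, hpos1, hpos2] with ω hA hB hA' hB' hp1 hp2
  have hval : I₁ * I₂ / 2 = (1 / 2) * I₁ * I₂ := by ring
  constructor
  · -- m → +∞
    set u : ℕ → ℝ := fun ℓ => (c (T^[ℓ] ω))⁻¹ with hu
    set v : ℕ → ℝ := fun ℓ => ∑ k ∈ Finset.Icc 1 ℓ, cbar (T^[k] ω) with hv
    have hunn : ∀ ℓ, 0 ≤ u ℓ := fun ℓ => inv_nonneg.mpr (hp1 ℓ).le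
    have hSu : Tendsto (fun n => (∑ ℓ ∈ Finset.range n, u ℓ) / (n:ℝ)) atTop (𝓝 I₁) := hA
    have hvt : Tendsto (fun ℓ => v ℓ / (ℓ:ℝ)) atTop (𝓝 I₂) := by
      have hveq : ∀ ℓ, v ℓ = birkhoffSum T cbar (ℓ + 1) ω - cbar ω := by
        intro ℓ
        show (∑ k ∈ Finset.Icc 1 ℓ, cbar (T^[k] ω)) = _
        rw [sum_Icc_one (fun k => cbar (T^[k] ω)) ℓ]
        have := Finset.sum_range_succ' (fun k => cbar (T^[k] ω)) ℓ
        have h0 : cbar (T^[0] ω) = cbar ω := by rw [Function.iterate_zero_apply]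
        rw [h0] at this
        have : (∑ j ∈ Finset.range ℓ, cbar (T^[j+1] ω))
            = birkhoffSum T cbar (ℓ + 1) ω - cbar ω := by
          rw [show birkhoffSum T cbar (ℓ + 1) ω = ∑ i ∈ Finset.range (ℓ+1), cbar (T^[i] ω) from rfl,
            this]
          ring
        exact this
      have hs := succ_div (x := fun n => birkhoffSum T cbar n ω) hB
      have hc0 := tendsto_const_div_atTop_nhds_zero_nat (cbar ω)
      have := hs.sub hc0
      rw [sub_zero] at this
      refine this.congr fun ℓ => ?_
      rw [hveq ℓ, sub_div]
    have hmain := lemB hunn hSu hvt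
    rw [hval] at hmain
    have hZtoN : Tendsto (fun m : ℤ => m.toNat) atTop atTop := by
      refine tendsto_atTop_atTop.mpr fun b => ⟨(b : ℤ), fun a ha => ?_⟩
      omega
    refine Tendsto.congr' ?_ (hmain.comp hZtoN)
    filter_upwards [eventually_ge_atTop (1:ℤ)] with m hm
    have hm0 : (0:ℤ) ≤ m := by linarith
    have hcast : ((m.toNat : ℕ) : ℝ) = (m : ℝ) := by exact_mod_cast Int.toNat_of_nonneg hm0
    simp only [Function.comp_apply]
    rw [hfpos ω m hm, hcast]
  · -- m → -∞
    set u' : ℕ → ℝ := fun ℓ => (c (T.symm^[ℓ] ω))⁻¹ with hu'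
    set U : ℕ → ℝ := fun j => u' (j + 1) with hU
    set V : ℕ → ℝ := fun j => birkhoffSum T.symm cbar (j + 1) ω with hV
    have hUnn : ∀ j, 0 ≤ U j := fun j => inv_nonneg.mpr (hp2 (j+1)).le
    have hSU : Tendsto (fun n => (∑ j ∈ Finset.range n, U j) / (n:ℝ)) atTop (𝓝 I₁) := by
      have hsum : ∀ n, (∑ j ∈ Finset.range n, U j)
          = birkhoffSum T.symm (fun ω' => (c ω')⁻¹) (n + 1) ω - (c ω)⁻¹ := by
        intro n
        have := Finset.sum_range_succ' (fun k => (c (T.symm^[k] ω))⁻¹) n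
        have h0 : (c (T.symm^[0] ω))⁻¹ = (c ω)⁻¹ := by rw [Function.iterate_zero_apply]
        rw [h0] at this
        rw [show birkhoffSum T.symm (fun ω' => (c ω')⁻¹) (n + 1) ω
          = ∑ i ∈ Finset.range (n+1), (c (T.symm^[i] ω))⁻¹ from rfl, this]
        ring
      have hs := succ_div (x := fun n => birkhoffSum T.symm (fun ω' => (c ω')⁻¹) n ω) hA'
      have hc0 := tendsto_const_div_atTop_nhds_zero_nat ((c ω)⁻¹)
      have := hs.sub hc0
      rw [sub_zero] at this
      refine this.congr fun n => ?_
      rw [hsum n, sub_div]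
    have hVt : Tendsto (fun j => V j / (j:ℝ)) atTop (𝓝 I₂) :=
      succ_div (x := fun n => birkhoffSum T.symm cbar n ω) hB'
    have hmain := lemB hUnn hSU hVt
    rw [hval] at hmain
    have hZtoNneg : Tendsto (fun m : ℤ => (-m).toNat) atBot atTop := by
      refine tendsto_atTop.mpr fun b => ?_
      filter_upwards [eventually_le_atBot (-(b:ℤ))] with m hm
      omega
    refine Tendsto.congr' ?_ (hmain.comp hZtoNneg)
    filter_upwards [eventually_le_atBot (-1 : ℤ)] with m hm
    have hm0 : (0:ℤ) ≤ -m := by linarith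
    have hcast : (((-m).toNat : ℕ) : ℝ) = ((-m : ℤ) : ℝ) := by
      exact_mod_cast Int.toNat_of_nonneg hm0
    have hcast2 : (((-m).toNat : ℕ) : ℝ) ^ 2 = (m : ℝ) ^ 2 := by
      rw [hcast]; push_cast; ring
    simp only [Function.comp_apply]
    rw [hfneg ω m hm, ← hcast2]
    congr 1
    rw [sum_Icc_one (fun ℓ => (c (T.symm^[ℓ] ω))⁻¹ * ∑ k ∈ Finset.range ℓ, cbar (T.symm^[k] ω))
      ((-m).toNat)]
    rfl
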